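/- For every n ≥ 4 and every diagonalizable complex n×n matrix A with n distinct eigenvalues, there exists a matrix X with rank(AX − XA) ≤ 2 such that for every matrix B commuting with A, rank(X − B) ≥ n/2. In particular d_r(AX,XA) ≤ 2/n while d_r(X,B) ≥ 1/2 for all B with AB = BA. -/

import Mathlib

open Matrix Polynomial Finset

namespace Stmt15Helpers


/-- Core Cauchy-kernel lemma: if `∑_{i∈s} c i / (t - u i) = 0` for all `t` in a
finset `T` of size at least `|s|`, with all `u i` (`i ∈ s`) distinct and avoiding `T`,
then all `c i` vanish on `s`. -/
lemma cauchy_aux {ι : Type*} [Fintype ι] [DecidableEq ι] (u : ι → ℂ) (s : Finset ι)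
    (T : Finset ℂ) (hu : Set.InjOn u s) (hdisj : ∀ i ∈ s, u i ∉ T)
    (hcard : s.card ≤ T.card) (c : ι → ℂ)
    (h : ∀ t ∈ T, ∑ i ∈ s, c i / (t - u i) = 0) :
    ∀ i ∈ s, c i = 0 := by
  classical
  rcases s.eq_empty_or_nonempty with rfl | hs
  · simp
  set P : Polynomial ℂ := ∑ i ∈ s, C (c i) * ∏ k ∈ s.erase i, (X - C (u k)) with hP
  have hdeg : P.natDegree < T.card := by
    have h1 : P.natDegree ≤ s.card - 1 := by
      apply Polynomial.natDegree_sum_le_of_forall_le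
      intro i hi
      calc (C (c i) * ∏ k ∈ s.erase i, (X - C (u k))).natDegree
          ≤ (∏ k ∈ s.erase i, (X - C (u k))).natDegree := Polynomial.natDegree_C_mul_le _ _
        _ ≤ ∑ k ∈ s.erase i, (X - C (u k)).natDegree := Polynomial.natDegree_prod_le _ _
        _ = ∑ k ∈ s.erase i, 1 := by
            refine Finset.sum_congr rfl fun k _ => ?_
            exact natDegree_X_sub_C _
        _ = s.card - 1 := by
            rw [Finset.sum_const, smul_eq_mul, mul_one, Finset.card_erase_of_mem hi]
    have h2 : s.card - 1 < s.card := Nat.sub_lt hs.card_pos one_pos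
    omega
  have heval : ∀ t ∈ T, P.eval t = 0 := by
    intro t ht
    have hsum : P.eval t = (∑ i ∈ s, c i / (t - u i)) * ∏ k ∈ s, (t - u k) := by
      rw [hP, Polynomial.eval_finset_sum, Finset.sum_mul]
      refine Finset.sum_congr rfl fun i hi => ?_
      have hne : t - u i ≠ 0 := sub_ne_zero.mpr fun h' => hdisj i hi (h' ▸ ht)
      rw [Polynomial.eval_mul, Polynomial.eval_C, Polynomial.eval_prod]
      simp only [Polynomial.eval_sub, Polynomial.eval_X, Polynomial.eval_C]
      rw [← Finset.mul_prod_erase s _ hi, ← mul_assoc, div_mul_cancel₀ _ hne]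
    rw [hsum, h t ht, zero_mul]
  have hP0 : P = 0 :=
    Polynomial.eq_zero_of_natDegree_lt_card_of_eval_eq_zero' P T heval hdeg
  intro i hi
  have hev : P.eval (u i) = c i * ∏ k ∈ s.erase i, (u i - u k) := by
    rw [hP, Polynomial.eval_finset_sum]
    rw [Finset.sum_eq_single_of_mem i hi]
    · rw [Polynomial.eval_mul, Polynomial.eval_C, Polynomial.eval_prod]
      simp only [Polynomial.eval_sub, Polynomial.eval_X, Polynomial.eval_C]
    · intro j hj hji
      rw [Polynomial.eval_mul, Polynomial.eval_prod]
      apply mul_eq_zero_of_right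
      apply Finset.prod_eq_zero (Finset.mem_erase.mpr ⟨Ne.symm hji, hi⟩)
      simp
  have hprod : ∏ k ∈ s.erase i, (u i - u k) ≠ 0 := by
    rw [Finset.prod_ne_zero_iff]
    intro k hk
    have hk' := Finset.mem_erase.mp hk
    exact sub_ne_zero.mpr fun h' => hk'.1 (hu hk'.2 hi h'.symm)
  have : c i * ∏ k ∈ s.erase i, (u i - u k) = 0 := by rw [← hev, hP0, Polynomial.eval_zero]
  exact (mul_eq_zero.mp this).resolve_right hprod



lemma rank_sel_le {n : ℕ} (M : Matrix (Fin n) (Fin n) ℂ) {m : Type*} [Fintype m] [DecidableEq m]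
    (h : m → Fin n) :
    (Matrix.of fun i k => M i (h k)).rank ≤ M.rank := by
  have heq : (Matrix.of fun i k => M i (h k)) =
      M * (Matrix.of fun j k => if j = h k then (1:ℂ) else 0) := by
    ext i k
    simp [Matrix.mul_apply]
  rw [heq]
  exact Matrix.rank_mul_le_left _ _

lemma card_le_rank_of_ker {n : ℕ} {m : Type*} [Fintype m] [DecidableEq m]
    (N : Matrix (Fin n) m ℂ)
    (hker : ∀ z : m → ℂ, N.mulVec z = 0 → z = 0) :
    Fintype.card m ≤ N.rank := by
  have h1 := LinearMap.finrank_range_add_finrank_ker N.mulVecLin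
  have h2 : LinearMap.ker N.mulVecLin = ⊥ :=
    LinearMap.ker_eq_bot'.mpr (fun z hz => hker z hz)
  rw [h2, finrank_bot, add_zero] at h1
  rw [Matrix.rank, h1, Module.finrank_pi]

lemma exists_ker_vec {n : ℕ} {m : Type*} [Fintype m] [DecidableEq m]
    (N : Matrix (Fin n) m ℂ) (h : N.rank < Fintype.card m) :
    ∃ z : m → ℂ, z ≠ 0 ∧ N.mulVec z = 0 := by
  by_contra hc
  push_neg at hc
  have hker : ∀ z : m → ℂ, N.mulVec z = 0 → z = 0 := by
    intro z hz
    by_contra hz0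
    exact hc z hz0 hz
  exact absurd (card_le_rank_of_ker N hker) (not_le.mpr h)


noncomputable def alphaF (n p : ℕ) (i : Fin n) : ℂ := if (i : ℕ) < p then 0 else 1

noncomputable def X0 {n : ℕ} (lam : Fin n → ℂ) (p : ℕ) : Matrix (Fin n) (Fin n) ℂ :=
  Matrix.of fun i j => (alphaF n p i - alphaF n p j) / (lam i - lam j)

lemma key {n : ℕ} (hn : 4 ≤ n) (lam : Fin n → ℂ) (hlam : Function.Injective lam)
    (d : Fin n → ℂ) :
    n - n / 2 ≤ (X0 lam (n - n / 2) - Matrix.diagonal d).rank := by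
  classical
  set q : ℕ := n / 2 with hq
  set p : ℕ := n - n / 2 with hp
  have hq2 : 2 ≤ q := by omega
  have hqp : q ≤ p := by omega
  have hpq1 : p ≤ q + 1 := by omega
  have hpn : p + q = n := by omega
  set M : Matrix (Fin n) (Fin n) ℂ := X0 lam p - Matrix.diagonal d with hM
  -- index embeddings
  have hplt : ∀ k : Fin p, (k : ℕ) < n := fun k => by omega
  have hglt : ∀ k : Fin q, p + (k : ℕ) < n := fun k => by omega
  set f : Fin p → Fin n := fun k => ⟨k, hplt k⟩ with hf
  set g : Fin q → Fin n := fun k => ⟨p + k, hglt k⟩ with hg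
  have hfinj : Function.Injective f := by
    intro a b hab
    have h : ((f a : Fin n) : ℕ) = ((f b : Fin n) : ℕ) := congrArg Fin.val hab
    exact Fin.ext h
  have hginj : Function.Injective g := by
    intro a b hab
    have h : p + (a : ℕ) = p + (b : ℕ) := congrArg Fin.val hab
    exact Fin.ext (by omega)
  have hfg : ∀ (a : Fin p) (b : Fin q), f a ≠ g b := by
    intro a b hab
    have := congrArg Fin.val hab
    simp only [hf, hg] at this
    omega
  have half : ∀ k : Fin p, alphaF n p (f k) = 0 := fun k => if_pos k.2
  have halg : ∀ k : Fin q, alphaF n p (g k) = 1 := by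
    intro k
    have h : ¬ ((g k : Fin n) : ℕ) < p := by
      have : ((g k : Fin n) : ℕ) = p + (k : ℕ) := rfl
      omega
    exact if_neg h
  -- entries of M
  have hMoff : ∀ i j : Fin n, i ≠ j →
      M i j = (alphaF n p i - alphaF n p j) / (lam i - lam j) := by
    intro i j hij
    simp [hM, X0, Matrix.sub_apply, Matrix.diagonal_apply_ne _ hij]
  have hMdiag : ∀ i : Fin n, M i i = -(d i) := by
    intro i
    simp [hM, X0, Matrix.sub_apply, Matrix.diagonal_apply_eq]
  have hlamfg : ∀ (a : Fin p) (b : Fin q), lam (g b) - lam (f a) ≠ 0 := by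
    intro a b
    exact sub_ne_zero.mpr fun h => (hfg a b (hlam h.symm)).elim
  -- main contradiction argument
  by_contra hcon
  push_neg at hcon
  -- Step 1: a kernel vector supported on the first p coordinates
  have hrkN1 : (Matrix.of fun i k => M i (f k)).rank < Fintype.card (Fin p) := by
    calc (Matrix.of fun i k => M i (f k)).rank ≤ M.rank := rank_sel_le M f
      _ < p := hcon
      _ = Fintype.card (Fin p) := (Fintype.card_fin p).symm
  obtain ⟨y, hy0, hyker⟩ := exists_ker_vec _ hrkN1
  have hrow : ∀ i : Fin n, ∑ k, M i (f k) * y k = 0 := by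
    intro i
    have := congrFun hyker i
    simpa [Matrix.mulVec, dotProduct] using this
  -- the image finsets used as evaluation nodes
  have hcardTg : (Finset.image (fun k : Fin q => lam (g k)) Finset.univ).card = q := by
    rw [Finset.card_image_of_injective _
      (show Function.Injective (fun k : Fin q => lam (g k)) from fun a b hab => hginj (hlam hab))]
    simp
  have hcardTf : (Finset.image (fun k : Fin p => lam (f k)) Finset.univ).card = p := by
    rw [Finset.card_image_of_injective _
      (show Function.Injective (fun k : Fin p => lam (f k)) from fun a b hab => hfinj (hlam hab))]
    simp
  -- rows in J give Cauchy relations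
  have hrowJ : ∀ k' : Fin q, ∑ k, y k / (lam (g k') - lam (f k)) = 0 := by
    intro k'
    have h0 := hrow (g k')
    calc ∑ k, y k / (lam (g k') - lam (f k))
        = ∑ k, M (g k') (f k) * y k := by
          refine Finset.sum_congr rfl fun k _ => ?_
          rw [hMoff _ _ (Ne.symm (hfg k k')), halg, half, sub_zero, one_div,
            inv_mul_eq_div]
      _ = 0 := h0
  -- Step 2: all entries of y are nonzero
  have hyne : ∀ k : Fin p, y k ≠ 0 := by
    intro k₀ hk0
    apply hy0
    have hvanish := cauchy_aux (fun k : Fin p => lam (f k)) (Finset.univ.erase k₀)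
      (Finset.image (fun k : Fin q => lam (g k)) Finset.univ)
      (fun a _ b _ hab => hfinj (hlam hab))
      (by
        intro i _ hmem
        obtain ⟨k, -, hk⟩ := Finset.mem_image.mp hmem
        exact hfg i k (hlam hk).symm)
      (by
        rw [hcardTg, Finset.card_erase_of_mem (Finset.mem_univ _)]
        simp only [Finset.card_univ, Fintype.card_fin]
        omega)
      y
      (by
        intro t ht
        obtain ⟨k', -, rfl⟩ := Finset.mem_image.mp ht
        rw [Finset.sum_erase _ (by rw [hk0]; exact zero_div _)]
        exact hrowJ k')
    funext k
    by_cases hkk : k = k₀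
    · rw [hkk]; exact hk0
    · exact hvanish k (Finset.mem_erase.mpr ⟨hkk, Finset.mem_univ _⟩)
  -- Step 3: the diagonal entries on I vanish
  have hdI : ∀ k : Fin p, d (f k) = 0 := by
    intro k''
    have h0 := hrow (f k'')
    rw [Finset.sum_eq_single k''] at h0
    · rw [hMdiag] at h0
      rcases mul_eq_zero.mp h0 with h | h
      · exact neg_eq_zero.mp h
      · exact absurd h (hyne k'')
    · intro k _ hkne
      have : M (f k'') (f k) = 0 := by
        rw [hMoff _ _ fun hh => hkne (hfinj hh).symm, half, half, sub_zero, zero_div]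
      rw [this, zero_mul]
    · intro hmem
      exact absurd (Finset.mem_univ _) hmem
  -- Step 4: 2q independent columns
  set col : Fin q ⊕ Fin q → Fin n := Sum.elim g (fun k => f (Fin.castLE hqp k)) with hcol
  have hcastinj : Function.Injective (fun k : Fin q => f (Fin.castLE hqp k)) := by
    intro a b hab
    have h := congrArg (Fin.val : Fin n → ℕ) hab
    exact Fin.ext h
  have hkerN2 : ∀ z : (Fin q ⊕ Fin q) → ℂ,
      (Matrix.of fun i c => M i (col c)).mulVec z = 0 → z = 0 := by
    intro z hz
    have hrow2 : ∀ i : Fin n,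
        (∑ k : Fin q, M i (g k) * z (Sum.inl k)) +
        (∑ k : Fin q, M i (f (Fin.castLE hqp k)) * z (Sum.inr k)) = 0 := by
      intro i
      have := congrFun hz i
      simpa [Matrix.mulVec, dotProduct, Fintype.sum_sum_type, hcol] using this
    -- first: the `a` part vanishes
    have hA : ∀ k : Fin q, z (Sum.inl k) = 0 := by
      have hvan := cauchy_aux (fun k : Fin q => lam (g k)) Finset.univ
        (Finset.image (fun k : Fin p => lam (f k)) Finset.univ)
        (fun a _ b _ hab => hginj (hlam hab))
        (by
          intro i _ hmem
          obtain ⟨k, -, hk⟩ := Finset.mem_image.mp hmem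
          exact hfg k i (hlam hk))
        (by
          rw [hcardTf]
          simp only [Finset.card_univ, Fintype.card_fin]
          omega)
        (fun k => z (Sum.inl k))
        (by
          intro t ht
          obtain ⟨k'', -, rfl⟩ := Finset.mem_image.mp ht
          have h0 := hrow2 (f k'')
          have hsecond : ∀ k : Fin q, M (f k'') (f (Fin.castLE hqp k)) * z (Sum.inr k) = 0 := by
            intro k
            by_cases hkk : f k'' = f (Fin.castLE hqp k)
            · rw [← hkk, hMdiag, hdI, neg_zero, zero_mul]
            · rw [hMoff _ _ hkk, half, half, sub_zero, zero_div, zero_mul]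
          rw [Finset.sum_congr rfl (fun k _ => hsecond k), Finset.sum_const,
            smul_zero, add_zero] at h0
          have hterm : ∀ k : Fin q, M (f k'') (g k) * z (Sum.inl k)
              = -(z (Sum.inl k) / (lam (f k'') - lam (g k))) := by
            intro k
            rw [hMoff _ _ (hfg k'' k), half, halg, zero_sub, neg_div, neg_mul,
              one_div, inv_mul_eq_div]
          rw [Finset.sum_congr rfl (fun k _ => hterm k), Finset.sum_neg_distrib,
            neg_eq_zero] at h0
          exact h0)
      intro k
      exact hvan k (Finset.mem_univ _)
    -- then: the `b` part vanishes
    have hB : ∀ k : Fin q, z (Sum.inr k) = 0 := by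
      have hvan := cauchy_aux (fun k : Fin q => lam (f (Fin.castLE hqp k))) Finset.univ
        (Finset.image (fun k : Fin q => lam (g k)) Finset.univ)
        (fun a _ b _ hab => hcastinj (hlam hab))
        (by
          intro i _ hmem
          obtain ⟨k, -, hk⟩ := Finset.mem_image.mp hmem
          exact hfg (Fin.castLE hqp i) k (hlam hk).symm)
        (by rw [hcardTg]; simp)
        (fun k => z (Sum.inr k))
        (by
          intro t ht
          obtain ⟨k''', -, rfl⟩ := Finset.mem_image.mp ht
          have h0 := hrow2 (g k''')
          have hfirst : ∀ k : Fin q, M (g k''') (g k) * z (Sum.inl k) = 0 := by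
            intro k
            rw [hA k, mul_zero]
          rw [Finset.sum_congr rfl (fun k _ => hfirst k), Finset.sum_const,
            smul_zero, zero_add] at h0
          have hterm : ∀ k : Fin q, M (g k''') (f (Fin.castLE hqp k)) * z (Sum.inr k)
              = z (Sum.inr k) / (lam (g k''') - lam (f (Fin.castLE hqp k))) := by
            intro k
            rw [hMoff _ _ (Ne.symm (hfg (Fin.castLE hqp k) k''')), halg, half,
              sub_zero, one_div, inv_mul_eq_div]
          rw [Finset.sum_congr rfl (fun k _ => hterm k)] at h0
          exact h0)
      intro k
      exact hvan k (Finset.mem_univ _)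
    funext c
    cases c with
    | inl k => exact hA k
    | inr k => exact hB k
  -- contradiction via rank counting
  have h2q : Fintype.card (Fin q ⊕ Fin q) ≤ (Matrix.of fun i c => M i (col c)).rank := by
    have h1 := LinearMap.finrank_range_add_finrank_ker
      (Matrix.of fun i c => M i (col c)).mulVecLin
    have h2 : LinearMap.ker (Matrix.of fun i c => M i (col c)).mulVecLin = ⊥ :=
      LinearMap.ker_eq_bot'.mpr (fun z hz => hkerN2 z hz)
    rw [h2, finrank_bot, add_zero] at h1
    rw [Matrix.rank, h1, Module.finrank_pi]
  have hle : (Matrix.of fun i c => M i (col c)).rank ≤ M.rank := rank_sel_le M col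
  have : (2 : ℕ) * q ≤ M.rank := by
    calc 2 * q = Fintype.card (Fin q ⊕ Fin q) := by simp [Fintype.card_sum]; omega
      _ ≤ (Matrix.of fun i c => M i (col c)).rank := h2q
      _ ≤ M.rank := hle
  omega

end Stmt15Helpers

open Stmt15Helpers in
/-- Theorem (almost commuting matrices): for `n ≥ 4` and `A` with simple
spectrum there is `X` with `rank (AX - XA) ≤ 2` which is far (in rank) from
every matrix commuting with `A`. -/
theorem stmt_15 {n : ℕ} (hn : 4 ≤ n) (A : Matrix (Fin n) (Fin n) ℂ)
    (hA : A.charpoly.roots.Nodup) :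
    ∃ X : Matrix (Fin n) (Fin n) ℂ, (A * X - X * A).rank ≤ 2 ∧
      ∀ B : Matrix (Fin n) (Fin n) ℂ, A * B = B * A →
        (n : ℝ) / 2 ≤ ((X - B).rank : ℝ) := by
  classical
  -- enumeration of the n distinct roots of the characteristic polynomial
  have hcard : Multiset.card A.charpoly.roots = n := by
    have h1 : A.charpoly.natDegree = n := by
      rw [Matrix.charpoly_natDegree_eq_dim, Fintype.card_fin]
    rw [Polynomial.splits_iff_card_roots.mp (IsAlgClosed.splits _), h1]
  have hFcard : A.charpoly.roots.toFinset.card = n := by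
    rw [Multiset.toFinset_card_of_nodup hA, hcard]
  set F : Finset ℂ := A.charpoly.roots.toFinset with hF
  set e := F.equivFin with he
  set lam : Fin n → ℂ := fun i => (e.symm (Fin.cast hFcard.symm i) : ℂ) with hlamdef
  have hlam : Function.Injective lam := by
    intro a b hab
    have h1 : e.symm (Fin.cast hFcard.symm a) = e.symm (Fin.cast hFcard.symm b) :=
      Subtype.coe_injective hab
    have h2 := e.symm.injective h1
    have h3 := congrArg Fin.val h2
    exact Fin.ext h3
  have hroot : ∀ i : Fin n, A.charpoly.IsRoot (lam i) := by
    intro i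
    have hmem : lam i ∈ A.charpoly.roots := by
      have := (e.symm (Fin.cast hFcard.symm i)).2
      exact Multiset.mem_toFinset.mp this
    exact (Polynomial.mem_roots'.mp hmem).2
  -- eigenvectors
  have hev : ∀ i : Fin n, ∃ v : Fin n → ℂ, v ≠ 0 ∧ A.mulVec v = lam i • v := by
    intro i
    have hdet : (Matrix.diagonal (fun _ : Fin n => lam i) - A).det = 0 := by
      have h2 : A.charpoly.eval (lam i)
          = (Matrix.diagonal (fun _ : Fin n => lam i) - A).det := by
        rw [Matrix.charpoly, _root_.eval_det, matPolyEquiv_charmatrix]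
        rw [Polynomial.eval_sub, Polynomial.eval_X, Polynomial.eval_C, Matrix.scalar_apply]
      rw [← h2]
      exact hroot i
    obtain ⟨v, hv0, hv⟩ := Matrix.exists_mulVec_eq_zero_iff.mpr hdet
    refine ⟨v, hv0, ?_⟩
    rw [Matrix.sub_mulVec] at hv
    have hdv : (Matrix.diagonal (fun _ : Fin n => lam i)).mulVec v = lam i • v := by
      funext j
      rw [Matrix.mulVec_diagonal]
      simp
    rw [hdv] at hv
    have := sub_eq_zero.mp hv
    exact this.symm
  choose v hv0 hveq using hev
  -- eigenvector matrix
  set P : Matrix (Fin n) (Fin n) ℂ := Matrix.of (fun i j => v j i) with hPdef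
  have hmulVecP : ∀ w : Fin n → ℂ, P.mulVec w = ∑ j, w j • v j := by
    intro w
    funext i
    simp only [Matrix.mulVec, dotProduct, hPdef, Matrix.of_apply, Finset.sum_apply,
      Pi.smul_apply, smul_eq_mul]
    exact Finset.sum_congr rfl fun j _ => mul_comm _ _
  have hAP : A * P = P * Matrix.diagonal lam := by
    ext i k
    have h1 : (A * P) i k = (A.mulVec (v k)) i := by
      simp [Matrix.mul_apply, Matrix.mulVec, dotProduct, hPdef]
    rw [h1, hveq k, Matrix.mul_diagonal]
    simp [hPdef, mul_comm]
  -- invertibility of P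
  have hli : LinearIndependent ℂ v := by
    apply Module.End.eigenvectors_linearIndependent' (Matrix.mulVecLin A) lam hlam v
    intro i
    refine ⟨Module.End.mem_eigenspace_iff.mpr ?_, hv0 i⟩
    simpa [Matrix.mulVecLin_apply] using hveq i
  have hdet : IsUnit P.det := by
    rw [isUnit_iff_ne_zero]
    intro hdet0
    obtain ⟨w, hw0, hw⟩ := Matrix.exists_mulVec_eq_zero_iff.mpr hdet0
    rw [hmulVecP] at hw
    exact hw0 (funext (Fintype.linearIndependent_iff.mp hli w hw))
  have hPinv : P * P⁻¹ = 1 := Matrix.mul_nonsing_inv P hdet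
  have hPinv' : P⁻¹ * P = 1 := Matrix.nonsing_inv_mul P hdet
  have hPA : P⁻¹ * A = Matrix.diagonal lam * P⁻¹ := by
    calc P⁻¹ * A = P⁻¹ * A * (P * P⁻¹) := by rw [hPinv, Matrix.mul_one]
      _ = P⁻¹ * (A * P) * P⁻¹ := by
          rw [← Matrix.mul_assoc, Matrix.mul_assoc (P⁻¹) A P]
      _ = P⁻¹ * (P * Matrix.diagonal lam) * P⁻¹ := by rw [hAP]
      _ = (P⁻¹ * P) * Matrix.diagonal lam * P⁻¹ := by rw [Matrix.mul_assoc (P⁻¹) P _]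
      _ = Matrix.diagonal lam * P⁻¹ := by rw [hPinv', Matrix.one_mul]
  -- the almost-commuting matrix
  set p : ℕ := n - n / 2 with hpdef
  set Y : Matrix (Fin n) (Fin n) ℂ := X0 lam p with hYdef
  set U : Matrix (Fin n) (Fin 2) ℂ :=
    Matrix.of (fun i k => if k = 0 then alphaF n p i else 1) with hUdef
  set V : Matrix (Fin 2) (Fin n) ℂ :=
    Matrix.of (fun k j => if k = 0 then 1 else -(alphaF n p j)) with hVdef
  have hUV : U * V = Matrix.diagonal lam * Y - Y * Matrix.diagonal lam := by
    ext i j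
    have hsum : (U * V) i j = alphaF n p i - alphaF n p j := by
      rw [Matrix.mul_apply, Fin.sum_univ_two]
      have e0 : U i 0 = alphaF n p i :=
        show (if (0 : Fin 2) = 0 then alphaF n p i else 1) = alphaF n p i from if_pos rfl
      have e1 : U i 1 = 1 :=
        show (if (1 : Fin 2) = 0 then alphaF n p i else 1) = 1 from if_neg (by decide)
      have f0 : V 0 j = 1 :=
        show (if (0 : Fin 2) = 0 then 1 else -(alphaF n p j)) = 1 from if_pos rfl
      have f1 : V 1 j = -(alphaF n p j) :=
        show (if (1 : Fin 2) = 0 then 1 else -(alphaF n p j)) = -(alphaF n p j) from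
          if_neg (by decide)
      rw [e0, e1, f0, f1]
      ring
    rw [hsum, Matrix.sub_apply, Matrix.diagonal_mul, Matrix.mul_diagonal]
    have hYij : Y i j = (alphaF n p i - alphaF n p j) / (lam i - lam j) := rfl
    by_cases hij : i = j
    · subst hij
      simp [hYij]
    · have hw : lam i - lam j ≠ 0 := sub_ne_zero.mpr fun h => hij (hlam h)
      rw [hYij]
      have hC : lam i * ((alphaF n p i - alphaF n p j) / (lam i - lam j)) -
          (alphaF n p i - alphaF n p j) / (lam i - lam j) * lam j
          = (alphaF n p i - alphaF n p j) / (lam i - lam j) * (lam i - lam j) := by ring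
      rw [hC, div_mul_cancel₀ _ hw]
  refine ⟨P * Y * P⁻¹, ?_, ?_⟩
  · -- commutator has rank at most 2
    have hcomm : A * (P * Y * P⁻¹) - (P * Y * P⁻¹) * A = (P * U) * (V * P⁻¹) := by
      have h1 : A * (P * Y * P⁻¹) = P * (Matrix.diagonal lam * Y) * P⁻¹ := by
        calc A * (P * Y * P⁻¹) = (A * P) * Y * P⁻¹ := by
              rw [← Matrix.mul_assoc, ← Matrix.mul_assoc]
          _ = (P * Matrix.diagonal lam) * Y * P⁻¹ := by rw [hAP]
          _ = P * (Matrix.diagonal lam * Y) * P⁻¹ := by rw [Matrix.mul_assoc P _ Y]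
      have h2 : (P * Y * P⁻¹) * A = P * (Y * Matrix.diagonal lam) * P⁻¹ := by
        calc (P * Y * P⁻¹) * A = P * Y * (P⁻¹ * A) := by
              rw [Matrix.mul_assoc]
          _ = P * Y * (Matrix.diagonal lam * P⁻¹) := by rw [hPA]
          _ = P * (Y * Matrix.diagonal lam) * P⁻¹ := by
              simp only [Matrix.mul_assoc]
      rw [h1, h2, ← Matrix.sub_mul, ← Matrix.mul_sub, ← hUV,
        ← Matrix.mul_assoc, Matrix.mul_assoc (P * U) V P⁻¹]
    rw [hcomm]
    calc ((P * U) * (V * P⁻¹)).rank ≤ (P * U).rank := Matrix.rank_mul_le_left _ _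
      _ ≤ Fintype.card (Fin 2) := Matrix.rank_le_card_width _
      _ = 2 := by simp
  · -- far from the commutant
    intro B hB
    set B₀ : Matrix (Fin n) (Fin n) ℂ := P⁻¹ * B * P with hB₀def
    have hDB : Matrix.diagonal lam * B₀ = B₀ * Matrix.diagonal lam := by
      calc Matrix.diagonal lam * B₀ = (Matrix.diagonal lam * P⁻¹) * B * P := by
            rw [hB₀def, ← Matrix.mul_assoc, ← Matrix.mul_assoc]
        _ = (P⁻¹ * A) * B * P := by rw [hPA]
        _ = P⁻¹ * (A * B) * P := by rw [Matrix.mul_assoc P⁻¹ A B]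
        _ = P⁻¹ * (B * A) * P := by rw [hB]
        _ = P⁻¹ * B * (A * P) := by
            simp only [Matrix.mul_assoc]
        _ = P⁻¹ * B * (P * Matrix.diagonal lam) := by rw [hAP]
        _ = B₀ * Matrix.diagonal lam := by rw [hB₀def, Matrix.mul_assoc (P⁻¹ * B) P _]
    set d : Fin n → ℂ := fun i => B₀ i i with hddef
    have hB₀diag : B₀ = Matrix.diagonal d := by
      ext i j
      by_cases hij : i = j
      · subst hij; simp [hddef]
      · have h1 : lam i * B₀ i j = B₀ i j * lam j := by
          have := congrFun (congrFun hDB i) j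
          simpa [Matrix.diagonal_mul, Matrix.mul_diagonal] using this
        have h2 : (lam i - lam j) * B₀ i j = 0 := by
          rw [sub_mul, h1, mul_comm (B₀ i j) (lam j)]
          ring
        have hw : lam i - lam j ≠ 0 := sub_ne_zero.mpr fun h => hij (hlam h)
        rw [Matrix.diagonal_apply_ne _ hij]
        exact (mul_eq_zero.mp h2).resolve_left hw
    have hBeq : B = P * B₀ * P⁻¹ := by
      rw [hB₀def]
      calc B = (P * P⁻¹) * B * (P * P⁻¹) := by rw [hPinv, Matrix.one_mul, Matrix.mul_one]
        _ = P * (P⁻¹ * B * P) * P⁻¹ := by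
            simp only [Matrix.mul_assoc]
    have hXB : P * Y * P⁻¹ - B = P * (Y - Matrix.diagonal d) * P⁻¹ := by
      rw [hBeq, hB₀diag, Matrix.mul_sub, Matrix.sub_mul]
    have hrank : (P * Y * P⁻¹ - B).rank = (Y - Matrix.diagonal d).rank := by
      rw [hXB]
      rw [Matrix.rank_mul_eq_left_of_isUnit_det P⁻¹ (P * (Y - Matrix.diagonal d))
        (Matrix.isUnit_nonsing_inv_det P hdet)]
      exact Matrix.rank_mul_eq_right_of_isUnit_det P (Y - Matrix.diagonal d) hdet
    have hkey := key hn lam hlam d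
    rw [hrank]
    have h2 : n ≤ 2 * (Y - Matrix.diagonal d).rank := by
      have : p ≤ (Y - Matrix.diagonal d).rank := hkey
      omega
    have h3 : (n : ℝ) ≤ 2 * ((Y - Matrix.diagonal d).rank : ℝ) := by
      exact_mod_cast h2
    linarith
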